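/- Let q be a prime power, 1 ≤ m ≤ ℓ, and s = gcd(m, ℓ). Then there exists an m-dimensional F_q-subspace U_0 of F_{q^ℓ} such that τ_{U_0} = c or τ_{U_0} = −c for some element c of F_{q^ℓ}^× that is a (q^s − 1)-th power in F_{q^ℓ}^× (equivalently, τ_{U_0} = ±ζ^{x(q^s − 1)} for a primitive element ζ of F_{q^ℓ} and some integer x). -/

import Mathlib

open scoped Classical

set_option maxHeartbeats 1000000
set_option synthInstance.maxHeartbeats 400000

private lemma prod_orbit_decomp {F : Type*} [Field F] (G : Finset F) (n : ℕ)
    (hn : G.card = n) (hG1 : (1:F) ∈ G)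
    (hGmul : ∀ g ∈ G, ∀ h ∈ G, g * h ∈ G)
    (hGinv : ∀ g ∈ G, g⁻¹ ∈ G)
    (hGprod : ∏ g ∈ G, g = -1) :
    ∀ N (S : Finset F), S.card ≤ N → (∀ x ∈ S, x ≠ 0) →
      (∀ g ∈ G, ∀ x ∈ S, g * x ∈ S) →
      ∃ d : F, d ≠ 0 ∧ (∏ x ∈ S, x = d ^ n ∨ ∏ x ∈ S, x = -d ^ n) := by
  intro N
  induction N with
  | zero =>
    intro S hS _ _
    rw [Finset.card_eq_zero.mp (Nat.le_zero.mp hS)]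
    exact ⟨1, one_ne_zero, Or.inl (by simp)⟩
  | succ N ih =>
    intro S hcard hS0 hSmul
    rcases S.eq_empty_or_nonempty with rfl | ⟨w, hw⟩
    · exact ⟨1, one_ne_zero, Or.inl (by simp)⟩
    have hw0 : w ≠ 0 := hS0 w hw
    set O : Finset F := G.image (· * w) with hO
    have hOsub : O ⊆ S := by
      intro x hx
      obtain ⟨g, hg, rfl⟩ := Finset.mem_image.mp hx
      exact hSmul g hg w hw
    have hwO : w ∈ O := Finset.mem_image.mpr ⟨1, hG1, one_mul w⟩
    have hinj : Set.InjOn (· * w) G := fun a _ b _ h => by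
      exact mul_left_injective₀ hw0 h
    have prodO : ∏ x ∈ O, x = -w ^ n := by
      rw [hO, Finset.prod_image hinj, Finset.prod_mul_distrib, hGprod,
        Finset.prod_const, hn, neg_one_mul]
    have hss : S \ O ⊂ S := by
      refine Finset.ssubset_iff_of_subset (Finset.sdiff_subset) |>.mpr ⟨w, hw, ?_⟩
      simp [hwO]
    have hcard' : (S \ O).card ≤ N := by
      have := Finset.card_lt_card hss
      omega
    have hclosed : ∀ g ∈ G, ∀ x ∈ S \ O, g * x ∈ S \ O := by
      intro g hg x hx
      rw [Finset.mem_sdiff] at hx ⊢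
      refine ⟨hSmul g hg x hx.1, fun hmem => hx.2 ?_⟩
      obtain ⟨h, hh, hhw⟩ := Finset.mem_image.mp hmem
      refine Finset.mem_image.mpr ⟨g⁻¹ * h, hGmul _ (hGinv g hg) _ hh, ?_⟩
      have hg0 : g ≠ 0 := fun h0 => by
        have := hS0 _ (hSmul g hg x hx.1); rw [h0, zero_mul] at this; exact this rfl
      show g⁻¹ * h * w = x
      rw [mul_assoc, hhw, ← mul_assoc, inv_mul_cancel₀ hg0, one_mul]
    obtain ⟨d, hd0, hd⟩ := ih (S \ O) hcard' (fun x hx => hS0 x (Finset.mem_sdiff.mp hx).1) hclosed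
    have hsplit : (∏ x ∈ S \ O, x) * ∏ x ∈ O, x = ∏ x ∈ S, x :=
      Finset.prod_sdiff hOsub
    refine ⟨w * d, mul_ne_zero hw0 hd0, ?_⟩
    rcases hd with hd | hd
    · right; rw [← hsplit, hd, prodO, mul_pow]; ring
    · left; rw [← hsplit, hd, prodO, mul_pow]; ring

/-- Claim 1: with `s = gcd(m, ℓ)`, there exists an `m`-dimensional `F_q`-subspace `U₀` of
`F_{q^ℓ}` such that `τ_{U₀} = ±c` for some nonzero `c` that is a `(q^s − 1)`-th power in
`F_{q^ℓ}^×`. -/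
theorem statement8 {K F : Type*} [Field K] [Field F] [Fintype K] [Fintype F] [Algebra K F]
    (q ℓ m s : ℕ) (hq : Fintype.card K = q) (hℓ : Module.finrank K F = ℓ)
    (hm1 : 1 ≤ m) (hmℓ : m ≤ ℓ) (hs : s = Nat.gcd m ℓ) :
    ∃ U₀ : Submodule K F, Module.finrank K U₀ = m ∧
      ∃ c : F, c ≠ 0 ∧ (∃ d : F, d ≠ 0 ∧ d ^ (q ^ s - 1) = c) ∧
        ((∏ u ∈ Finset.univ.filter (fun u : F => u ∈ U₀ ∧ u ≠ 0), u) = c ∨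
         (∏ u ∈ Finset.univ.filter (fun u : F => u ∈ U₀ ∧ u ≠ 0), u) = -c) := by
  classical
  have hq2 : 2 ≤ q := hq ▸ Fintype.one_lt_card
  have hs1 : 1 ≤ s := by
    rw [hs]; exact Nat.gcd_pos_of_pos_left ℓ hm1
  have hsm : s ∣ m := hs ▸ Nat.gcd_dvd_left m ℓ
  have hsl : s ∣ ℓ := hs ▸ Nat.gcd_dvd_right m ℓ
  have hl1 : 1 ≤ ℓ := le_trans hm1 hmℓ
  -- characteristic
  set p := ringChar K with hp
  haveI : CharP K p := ringChar.charP K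
  haveI : Fact p.Prime := ⟨CharP.char_is_prime K p⟩
  obtain ⟨a, hpa, hqa⟩ := FiniteField.card K p
  rw [hq] at hqa
  haveI : CharP F p := charP_of_injective_algebraMap (algebraMap K F).injective p
  have hfrob : ∀ x y : F, (x + y) ^ q ^ s = x ^ q ^ s + y ^ q ^ s := by
    intro x y
    have hqs : q ^ s = p ^ ((a : ℕ) * s) := by rw [hqa, pow_mul]
    rw [hqs]
    exact add_pow_char_pow x y p ((a : ℕ) * s)
  have hqs0 : q ^ s ≠ 0 := by positivity
  -- the subfield of elements fixed by the s-fold q-Frobenius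
  let Ealg : Subalgebra K F :=
  { carrier := {x : F | x ^ q ^ s = x}
    mul_mem' := fun {x y} hx hy => by
      simp only [Set.mem_setOf_eq] at *
      rw [mul_pow, hx, hy]
    one_mem' := by simp
    add_mem' := fun {x y} hx hy => by
      simp only [Set.mem_setOf_eq] at *
      rw [hfrob, hx, hy]
    zero_mem' := by simp [zero_pow hqs0]
    algebraMap_mem' := fun k => by
      simp only [Set.mem_setOf_eq]
      rw [← map_pow]
      congr 1
      have := FiniteField.pow_card_pow s k
      rwa [hq] at this }
  have hmemEalg : ∀ x : F, x ∈ Ealg ↔ x ^ q ^ s = x := fun x => Iff.rfl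
  let E' : IntermediateField K F := Ealg.toIntermediateField (fun x hx => by
    rcases eq_or_ne x 0 with rfl | hx0
    · simpa using Ealg.zero_mem
    · rw [hmemEalg] at hx ⊢
      rw [inv_pow, hx])
  have hmemE : ∀ x : F, x ∈ E' ↔ x ^ q ^ s = x := fun x => Iff.rfl
  -- cardinalities
  have hcardF : Fintype.card F = q ^ ℓ := by
    rw [← hq, ← hℓ]; exact Module.card_eq_pow_finrank
  have hq1 : 1 < q := hq2
  have hs0 : s ≠ 0 := by omega
  have hl0 : ℓ ≠ 0 := by omega
  set P : Polynomial F := Polynomial.X ^ q ^ s - Polynomial.X with hPdef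
  set Q : Polynomial F := Polynomial.X ^ q ^ ℓ - Polynomial.X with hQdef
  have hQroots : Q.roots = Finset.univ.val := by
    have h := FiniteField.roots_X_pow_card_sub_X F
    rw [hcardF] at h
    exact h
  have hQne : Q ≠ 0 := FiniteField.X_pow_card_pow_sub_X_ne_zero F hl0 hq1
  have hPne : P ≠ 0 := FiniteField.X_pow_card_pow_sub_X_ne_zero F hs0 hq1
  have hdvdnat : q ^ s - 1 ∣ q ^ ℓ - 1 := by
    obtain ⟨t, rfl⟩ := hsl
    have := Nat.sub_dvd_pow_sub_pow (q ^ s) 1 t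
    rwa [one_pow, ← pow_mul] at this
  have hdvd : P ∣ Q := by
    obtain ⟨k, hk⟩ := hdvdnat
    have h1 : (Polynomial.X : Polynomial F) ^ (q ^ s - 1) - 1 ∣
        Polynomial.X ^ (q ^ ℓ - 1) - 1 := by
      have := sub_dvd_pow_sub_pow ((Polynomial.X : Polynomial F) ^ (q ^ s - 1)) 1 k
      rwa [← pow_mul, one_pow, ← hk] at this
    have h2 : P = Polynomial.X * ((Polynomial.X : Polynomial F) ^ (q ^ s - 1) - 1) := by
      rw [hPdef]
      conv_lhs => rw [show q ^ s = (q ^ s - 1) + 1 from by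
        have : 1 ≤ q ^ s := Nat.one_le_pow _ _ (by omega); omega]
      rw [pow_succ]; ring
    have h3 : Q = Polynomial.X * ((Polynomial.X : Polynomial F) ^ (q ^ ℓ - 1) - 1) := by
      rw [hQdef]
      conv_lhs => rw [show q ^ ℓ = (q ^ ℓ - 1) + 1 from by
        have : 1 ≤ q ^ ℓ := Nat.one_le_pow _ _ (by omega); omega]
      rw [pow_succ]; ring
    rw [h2, h3]
    exact mul_dvd_mul_left _ h1
  have hQsplits : Q.Splits := by
    rw [Polynomial.splits_iff_card_roots, hQroots]
    have h1 : Multiset.card (Finset.univ.val : Multiset F) = Fintype.card F := rfl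
    rw [h1, hcardF, hQdef, FiniteField.X_pow_card_pow_sub_X_natDegree_eq F hl0 hq1]
  have hPsplits : P.Splits :=
    hQsplits.of_dvd hQne hdvd
  have hProotsCard : Multiset.card P.roots = q ^ s := by
    rw [Polynomial.splits_iff_card_roots.mp hPsplits, hPdef,
      FiniteField.X_pow_card_pow_sub_X_natDegree_eq F hs0 hq1]
  have hPnodup : P.roots.Nodup := by
    have hle : P.roots ≤ Q.roots := Polynomial.roots.le_of_dvd hQne hdvd
    rw [hQroots] at hle
    exact Multiset.nodup_of_le hle Finset.univ.nodup
  have hfilter : Finset.univ.filter (fun x : F => x ∈ E') = P.roots.toFinset := by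
    ext x
    rw [Finset.mem_filter, Multiset.mem_toFinset, Polynomial.mem_roots hPne]
    simp only [Finset.mem_filter, Finset.mem_univ, true_and, Multiset.mem_toFinset,
      Polynomial.mem_roots hPne, Polynomial.IsRoot, hPdef, Polynomial.eval_sub,
      Polynomial.eval_pow, Polynomial.eval_X, sub_eq_zero, hmemE]
  have hfiltercard : (Finset.univ.filter (fun x : F => x ∈ E')).card = q ^ s := by
    rw [hfilter, Multiset.toFinset_card_of_nodup hPnodup, hProotsCard]
  have hcardE : Fintype.card E' = q ^ s := by
    rw [← hfiltercard]
    exact Fintype.card_subtype _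
  -- dimensions
  haveI : FiniteDimensional E' F := Module.Finite.of_finite
  set t := Module.finrank E' F with ht
  have hcardF' : Fintype.card F = (q ^ s) ^ t := by
    rw [← hcardE, ht]; exact Module.card_eq_pow_finrank
  have hlst : ℓ = s * t := Nat.pow_right_injective hq2 (by
    rw [← hcardF, hcardF', ← pow_mul] : q ^ ℓ = q ^ (s * t))
  obtain ⟨k, hk⟩ := hsm
  have hkt : k ≤ t := by
    have h1 : s * k ≤ s * t := by rw [← hk, ← hlst]; exact hmℓ
    exact Nat.le_of_mul_le_mul_left h1 (by omega)
  let b := Module.finBasis E' F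
  let v : Fin k → F := fun i => b (Fin.castLE hkt i)
  have hv : LinearIndependent E' v :=
    b.linearIndependent.comp _ (Fin.castLE_injective hkt)
  set W : Submodule E' F := Submodule.span E' (Set.range v) with hW
  have hWrank : Module.finrank E' W = k := by
    rw [hW, finrank_span_eq_card hv, Fintype.card_fin]
  have hcardW : Fintype.card W = q ^ m := by
    rw [Module.card_eq_pow_finrank (K := E') (V := W), hcardE, hWrank, ← pow_mul, ← hk]
  set U₀ : Submodule K F := W.restrictScalars K with hU
  have hUW : ∀ x : F, x ∈ U₀ ↔ x ∈ W := fun x => Iff.rfl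
  have hcardU : Fintype.card U₀ = q ^ m := by
    rw [← hcardW]
    exact Fintype.card_congr (Equiv.setCongr (Submodule.coe_restrictScalars K W))
  have hrankU : Module.finrank K U₀ = m := Nat.pow_right_injective hq2 (by
    rw [← hcardU, ← hq]
    exact (Module.card_eq_pow_finrank (K := K) (V := U₀)).symm :
    q ^ Module.finrank K U₀ = q ^ m)
  refine ⟨U₀, hrankU, ?_⟩
  -- the group G of nonzero elements of E'
  set G : Finset F := (Finset.univ.filter (fun x : F => x ∈ E')).erase 0 with hGdef
  have hGmem : ∀ x : F, x ∈ G ↔ x ∈ E' ∧ x ≠ 0 := by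
    intro x
    rw [hGdef, Finset.mem_erase, Finset.mem_filter]
    simp only [Finset.mem_univ, true_and]
    tauto
  have hGcard : G.card = q ^ s - 1 := by
    rw [hGdef, Finset.card_erase_of_mem (by
      simp only [Finset.mem_filter, Finset.mem_univ, true_and]; exact E'.zero_mem),
      hfiltercard]
  have hG1 : (1 : F) ∈ G := (hGmem 1).mpr ⟨E'.one_mem, one_ne_zero⟩
  have hGmul : ∀ g ∈ G, ∀ h ∈ G, g * h ∈ G := by
    intro g hg h hh
    rw [hGmem] at hg hh ⊢
    exact ⟨mul_mem hg.1 hh.1, mul_ne_zero hg.2 hh.2⟩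
  have hGinv : ∀ g ∈ G, g⁻¹ ∈ G := by
    intro g hg
    rw [hGmem] at hg ⊢
    exact ⟨E'.inv_mem hg.1, inv_ne_zero hg.2⟩
  have hGprod : ∏ g ∈ G, g = -1 := by
    have hinj : Function.Injective (fun y : E'ˣ => ((y : E') : F)) := by
      intro y z hyz
      exact Units.ext (Subtype.ext hyz)
    have himg : Finset.univ.image (fun y : E'ˣ => ((y : E') : F)) = G := by
      ext x
      simp only [Finset.mem_image, Finset.mem_univ, true_and, hGmem]
      constructor
      · rintro ⟨y, rfl⟩
        refine ⟨(y : E').2, ?_⟩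
        simp only [ne_eq, ZeroMemClass.coe_eq_zero]
        exact y.ne_zero
      · rintro ⟨hxE, hx0⟩
        have hxne : (⟨x, hxE⟩ : E') ≠ 0 := fun h => hx0 (congrArg Subtype.val h)
        exact ⟨Units.mk0 ⟨x, hxE⟩ hxne, rfl⟩
    rw [← himg, Finset.prod_image (fun y _ z _ h => hinj h)]
    have h1 : ∏ y : E'ˣ, ((y : E') : F) = (((∏ y : E'ˣ, (y : E')) : E') : F) := by
      exact (map_prod (algebraMap E' F) _ _).symm
    have h2 : (∏ y : E'ˣ, (y : E')) = (((∏ y : E'ˣ, y) : E'ˣ) : E') :=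
      (map_prod (Units.coeHom E') _ _).symm
    have h3 : (∏ y : E'ˣ, y) = (-1 : E'ˣ) := FiniteField.prod_univ_units_id_eq_neg_one
    rw [h1, h2, h3]
    simp
  -- closure of W under multiplication by G
  have hsmulW : ∀ g ∈ G, ∀ x : F, x ∈ W → g * x ∈ W := by
    intro g hg x hx
    have hgE : g ∈ E' := ((hGmem g).mp hg).1
    have h := W.smul_mem (⟨g, hgE⟩ : E') hx
    rwa [show (⟨g, hgE⟩ : E') • x = g * x from by rw [Algebra.smul_def]; rfl] at h
  -- apply the orbit decomposition
  obtain ⟨d, hd0, hd⟩ := prod_orbit_decomp G (q ^ s - 1) hGcard hG1 hGmul hGinv hGprod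
    (Finset.univ.filter (fun u : F => u ∈ U₀ ∧ u ≠ 0)).card
    (Finset.univ.filter (fun u : F => u ∈ U₀ ∧ u ≠ 0)) le_rfl
    (fun x hx => (Finset.mem_filter.mp hx).2.2)
    (by
      intro g hg x hx
      rw [Finset.mem_filter] at hx ⊢
      refine ⟨Finset.mem_univ _, ?_, mul_ne_zero ((hGmem g).mp hg).2 hx.2.2⟩
      rw [hUW]
      exact hsmulW g hg x ((hUW x).mp hx.2.1))
  exact ⟨d ^ (q ^ s - 1), pow_ne_zero _ hd0, ⟨d, hd0, rfl⟩, hd⟩
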